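/- (Alternate Hadamard test) Let U = U_{2m} ⋯ U_1 be a product of 2m unitaries on C^{2^n} with U|ψ⟩ having any unit input |ψ⟩. For i = 1, ..., m define W_i = |0⟩⟨0| ⊗ U†_{2m+1−i} + |1⟩⟨1| ⊗ U_i on C^2 ⊗ C^{2^n}. Then applying (H ⊗ I) W_m ⋯ W_1 (H ⊗ I) to |0⟩|ψ⟩ and measuring the first qubit in the standard basis yields outcome 0 with probability (1 + Re⟨ψ|U|ψ⟩)/2. -/

import Mathlib

open Matrix Kronecker

noncomputable section

/-- The Hadamard gate. -/
def H2 : Matrix (Fin 2) (Fin 2) ℂ :=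
  (((Real.sqrt 2)⁻¹ : ℝ) : ℂ) • !![1, 1; 1, -1]

/-- The projector `|0⟩⟨0|` on one qubit. -/
def e00 : Matrix (Fin 2) (Fin 2) ℂ := Matrix.single 0 0 1

/-- The projector `|1⟩⟨1|` on one qubit. -/
def e11 : Matrix (Fin 2) (Fin 2) ℂ := Matrix.single 1 1 1

variable {α : Type*} [Fintype α] [DecidableEq α]

lemma e00_add_e11 : e00 + e11 = (1 : Matrix (Fin 2) (Fin 2) ℂ) := by
  ext i j
  fin_cases i <;> fin_cases j <;>
    simp [e00, e11, Matrix.single, Matrix.one_apply]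

lemma block_mul (X X' Y Y' : Matrix α α ℂ) :
    (e00 ⊗ₖ X + e11 ⊗ₖ Y) * (e00 ⊗ₖ X' + e11 ⊗ₖ Y')
      = e00 ⊗ₖ (X * X') + e11 ⊗ₖ (Y * Y') := by
  have h00 : e00 * e00 = e00 := by
    rw [e00, Matrix.single_mul_single_same]; norm_num
  have h11 : e11 * e11 = e11 := by
    rw [e11, Matrix.single_mul_single_same]; norm_num
  have h01 : e00 * e11 = 0 :=
    by rw [e00, e11]; exact Matrix.single_mul_single_of_ne (c := 1) 0 0 1 (by decide) 1
  have h10 : e11 * e00 = 0 :=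
    by rw [e00, e11]; exact Matrix.single_mul_single_of_ne (c := 1) 1 1 0 (by decide) 1
  rw [add_mul, mul_add, mul_add, ← Matrix.mul_kronecker_mul, ← Matrix.mul_kronecker_mul,
    ← Matrix.mul_kronecker_mul, ← Matrix.mul_kronecker_mul, h00, h11, h01, h10]
  simp

lemma prod_ofFn_rev_block {k : ℕ} (f g : Fin k → Matrix α α ℂ) :
    (List.ofFn (fun i => e00 ⊗ₖ g i + e11 ⊗ₖ f i)).reverse.prod
      = e00 ⊗ₖ (List.ofFn g).reverse.prod + e11 ⊗ₖ (List.ofFn f).reverse.prod := by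
  induction k with
  | zero =>
      simp only [List.ofFn_zero, List.reverse_nil, List.prod_nil]
      rw [← Matrix.add_kronecker, e00_add_e11, Matrix.one_kronecker_one]
  | succ k ih =>
      rw [List.ofFn_succ, List.ofFn_succ (f := g), List.ofFn_succ (f := f)]
      simp only [List.reverse_cons, List.prod_append, List.prod_cons, List.prod_nil, mul_one]
      rw [ih, block_mul]

lemma ofFn_reverse {β : Type*} {k : ℕ} (f : Fin k → β) :
    (List.ofFn f).reverse = List.ofFn (fun i => f i.rev) := by
  apply List.ext_getElem <;> simp [List.getElem_reverse, Fin.rev]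
  intro i h1
  exact congrArg f (Fin.ext (by show k - 1 - i = k - (i + 1); omega))

lemma ofFn_two_mul {β : Type*} (k : ℕ) (f : Fin (2 * k) → β) :
    List.ofFn f = (List.ofFn fun i : Fin k => f ⟨i, by omega⟩)
      ++ (List.ofFn fun i : Fin k => f ⟨k + i, by omega⟩) := by
  apply List.ext_getElem
  · simp; omega
  · intro i h1 h2
    simp only [List.getElem_ofFn, List.getElem_append, List.length_ofFn]
    split
    · exact congrArg f (Fin.ext (by simp))
    · exact congrArg f (Fin.ext (by simp; omega))


set_option maxHeartbeats 1000000 in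
/-- The alternate Hadamard test: with `U = U_{2m} ⋯ U_1` and
`W_i = |0⟩⟨0| ⊗ U†_{2m+1-i} + |1⟩⟨1| ⊗ U_i`, applying `(H⊗I) W_m ⋯ W_1 (H⊗I)` to
`|0⟩|ψ⟩` and measuring the first qubit yields outcome `0` with probability
`(1 + Re⟨ψ|U|ψ⟩)/2`. -/
theorem alternate_hadamard_test (n m : ℕ)
    (U : Fin (2 * m) → Matrix (Fin n → ZMod 2) (Fin n → ZMod 2) ℂ)
    (hU : ∀ j, U j ∈ Matrix.unitaryGroup (Fin n → ZMod 2) ℂ)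
    (ψ : (Fin n → ZMod 2) → ℂ) (hψ : star ψ ⬝ᵥ ψ = 1) :
    let W : Fin m → Matrix (Fin 2 × (Fin n → ZMod 2)) (Fin 2 × (Fin n → ZMod 2)) ℂ :=
      fun i => e00 ⊗ₖ (U ⟨2 * m - 1 - i.val, by have := i.isLt; omega⟩)ᴴ +
        e11 ⊗ₖ U ⟨i.val, by have := i.isLt; omega⟩
    let Utot := (List.ofFn U).reverse.prod
    let Hf := H2 ⊗ₖ (1 : Matrix (Fin n → ZMod 2) (Fin n → ZMod 2) ℂ)
    let v : Fin 2 × (Fin n → ZMod 2) → ℂ := fun p => if p.1 = 0 then ψ p.2 else 0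
    let φ := (Hf * (List.ofFn W).reverse.prod * Hf) *ᵥ v
    ∑ x : Fin n → ZMod 2, ‖φ (0, x)‖ ^ 2 =
      (1 + (star ψ ⬝ᵥ Utot *ᵥ ψ).re) / 2 := by
  intro W Utot Hf v φ
  set A : Matrix (Fin n → ZMod 2) (Fin n → ZMod 2) ℂ :=
    (List.ofFn fun i : Fin m => U ⟨i, by have := i.isLt; omega⟩).reverse.prod with hA_def
  set C : Matrix (Fin n → ZMod 2) (Fin n → ZMod 2) ℂ :=
    (List.ofFn fun i : Fin m => U ⟨m + i, by have := i.isLt; omega⟩).reverse.prod with hC_def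
  -- the middle product
  have hProd : (List.ofFn W).reverse.prod = e00 ⊗ₖ Cᴴ + e11 ⊗ₖ A := by
    have h2 : Cᴴ = (List.ofFn fun i : Fin m =>
        (U ⟨2 * m - 1 - i.val, by have := i.isLt; omega⟩)ᴴ).reverse.prod := by
      rw [hC_def, Matrix.conjTranspose_list_prod, List.map_reverse, List.reverse_reverse,
        List.map_ofFn, ofFn_reverse]
      refine congrArg List.prod (congrArg List.ofFn (funext fun i => ?_))
      exact congrArg (fun x : Fin (2*m) => (U x)ᴴ)
        (Fin.ext (by have := i.isLt; simp [Fin.rev]; omega))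
    rw [h2, hA_def]
    exact prod_ofFn_rev_block (fun i : Fin m => U ⟨i.val, by have := i.isLt; omega⟩)
      (fun i : Fin m => (U ⟨2 * m - 1 - i.val, by have := i.isLt; omega⟩)ᴴ)
  -- splitting Utot
  have hUtot : Utot = C * A := by
    show (List.ofFn U).reverse.prod = _
    rw [ofFn_two_mul m U, List.reverse_append, List.prod_append]
  -- unitarity
  have hCC : C * Cᴴ = 1 := by
    have hmem : C ∈ Matrix.unitaryGroup (Fin n → ZMod 2) ℂ := by
      apply list_prod_mem
      intro x hx
      simp only [List.mem_reverse, List.mem_ofFn, Set.mem_range] at hx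
      obtain ⟨i, rfl⟩ := hx
      exact hU _
    simpa [Matrix.star_eq_conjTranspose] using Matrix.mem_unitaryGroup_iff.mp hmem
  have hAA : Aᴴ * A = 1 := by
    have hmem : A ∈ Matrix.unitaryGroup (Fin n → ZMod 2) ℂ := by
      apply list_prod_mem
      intro x hx
      simp only [List.mem_reverse, List.mem_ofFn, Set.mem_range] at hx
      obtain ⟨i, rfl⟩ := hx
      exact hU _
    simpa [Matrix.star_eq_conjTranspose] using Matrix.mem_unitaryGroup_iff'.mp hmem
  -- conjugated Hadamards
  have hhalf : ((Real.sqrt 2 : ℝ) : ℂ)⁻¹ * ((Real.sqrt 2 : ℝ) : ℂ)⁻¹ = 1 / 2 := by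
    have h : ((Real.sqrt 2)⁻¹ * (Real.sqrt 2)⁻¹ : ℝ) = 1 / 2 := by
      rw [← mul_inv, Real.mul_self_sqrt (by norm_num : (0:ℝ) ≤ 2)]; norm_num
    rw [← Complex.ofReal_inv, ← Complex.ofReal_mul, h]; push_cast; norm_num
  have he0 : e00 = !![1,0;0,0] := by
    ext i j; fin_cases i <;> fin_cases j <;> simp [e00, Matrix.single]
  have he1 : e11 = !![0,0;0,1] := by
    ext i j; fin_cases i <;> fin_cases j <;> simp [e11, Matrix.single]
  have hH00 : H2 * e00 * H2 = (1/2 : ℂ) • !![1, 1; 1, 1] := by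
    ext i j
    fin_cases i <;> fin_cases j <;>
      simp [H2, he0, Matrix.mul_apply, Fin.sum_univ_two] <;>
      first | ring1 | linear_combination hhalf | linear_combination -hhalf | linear_combination 2*hhalf | linear_combination -2*hhalf
  have hH11 : H2 * e11 * H2 = (1/2 : ℂ) • !![1, -1; -1, 1] := by
    ext i j
    fin_cases i <;> fin_cases j <;>
      simp [H2, he1, Matrix.mul_apply, Fin.sum_univ_two] <;>
      first | ring1 | linear_combination hhalf | linear_combination -hhalf | linear_combination 2*hhalf | linear_combination -2*hhalf
  -- the full conjugated matrix
  have hM : Hf * (List.ofFn W).reverse.prod * Hf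
      = ((1/2 : ℂ) • !![1, 1; 1, 1]) ⊗ₖ Cᴴ + ((1/2 : ℂ) • !![1, -1; -1, 1]) ⊗ₖ A := by
    show (H2 ⊗ₖ 1) * _ * (H2 ⊗ₖ 1) = _
    rw [hProd, mul_add, add_mul, ← Matrix.mul_kronecker_mul, ← Matrix.mul_kronecker_mul,
      ← Matrix.mul_kronecker_mul, ← Matrix.mul_kronecker_mul, one_mul, mul_one, one_mul, mul_one,
      hH00, hH11]
  -- the amplitude on the 0 block
  have hφ0 : ∀ x, φ (0, x) = (1/2 : ℂ) * ((Cᴴ + A) *ᵥ ψ) x := by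
    intro x
    show ((Hf * (List.ofFn W).reverse.prod * Hf) *ᵥ v) (0, x) = _
    rw [hM]
    simp [Matrix.mulVec, dotProduct, Fintype.sum_prod_type, Fin.sum_univ_two,
      Matrix.add_apply, Matrix.kroneckerMap_apply, Matrix.smul_apply, v, Finset.mul_sum]
    refine Finset.sum_congr rfl fun y _ => by ring
  -- the dot product identity
  have hdot : star ((Cᴴ + A) *ᵥ ψ) ⬝ᵥ ((Cᴴ + A) *ᵥ ψ)
      = 2 + (star ψ ⬝ᵥ Utot *ᵥ ψ) + star (star ψ ⬝ᵥ Utot *ᵥ ψ) := by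
    have hKK : (Cᴴ + A)ᴴ * (Cᴴ + A) = 1 + 1 + Utot + Utotᴴ := by
      rw [Matrix.conjTranspose_add, Matrix.conjTranspose_conjTranspose, add_mul, mul_add,
        mul_add, hCC, hAA, hUtot, ← Matrix.conjTranspose_mul]
      abel
    have hstep : star ((Cᴴ + A) *ᵥ ψ) ⬝ᵥ ((Cᴴ + A) *ᵥ ψ)
        = star ψ ⬝ᵥ ((Cᴴ + A)ᴴ * (Cᴴ + A)) *ᵥ ψ := by
      rw [Matrix.star_mulVec, Matrix.dotProduct_mulVec, Matrix.vecMul_vecMul,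
        ← Matrix.dotProduct_mulVec]
    have hconj : star ψ ⬝ᵥ Utotᴴ *ᵥ ψ = star (star ψ ⬝ᵥ Utot *ᵥ ψ) := by
      rw [Matrix.star_dotProduct, Matrix.star_mulVec, Matrix.conjTranspose_conjTranspose,
        ← Matrix.dotProduct_mulVec]
    rw [hstep, hKK]
    simp only [Matrix.add_mulVec, Matrix.one_mulVec, dotProduct_add, hψ, hconj]
    ring
  -- putting it together
  have habs : ∀ x, ‖φ (0, x)‖ ^ 2
      = (1/4 : ℝ) * ‖((Cᴴ + A) *ᵥ ψ) x‖ ^ 2 := by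
    intro x
    rw [hφ0, norm_mul]
    have : ‖(1/2 : ℂ)‖ = 1/2 := by norm_num
    rw [this]; ring
  have hsq : ∀ x, (‖((Cᴴ + A) *ᵥ ψ) x‖ ^ 2 : ℝ)
      = (star ((Cᴴ + A) *ᵥ ψ) x * ((Cᴴ + A) *ᵥ ψ) x).re := by
    intro x
    rw [Pi.star_apply, Complex.sq_norm]
    rw [show star (((Cᴴ + A) *ᵥ ψ) x) * ((Cᴴ + A) *ᵥ ψ) x
        = (Complex.normSq (((Cᴴ + A) *ᵥ ψ) x) : ℂ) by
      rw [mul_comm]; exact Complex.mul_conj _]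
    simp
  calc ∑ x : Fin n → ZMod 2, ‖φ (0, x)‖ ^ 2
      = (1/4 : ℝ) * ∑ x, (star ((Cᴴ + A) *ᵥ ψ) x * ((Cᴴ + A) *ᵥ ψ) x).re := by
        rw [Finset.mul_sum]
        exact Finset.sum_congr rfl fun x _ => by rw [habs, hsq]
    _ = (1/4 : ℝ) * (star ((Cᴴ + A) *ᵥ ψ) ⬝ᵥ ((Cᴴ + A) *ᵥ ψ)).re := by
        rw [dotProduct, Complex.re_sum]
    _ = (1 + (star ψ ⬝ᵥ Utot *ᵥ ψ).re) / 2 := by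
        rw [hdot]
        simp only [Complex.add_re, Complex.star_def, Complex.conj_re]
        norm_num
        ring
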